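/- arXiv:1812.05680 — 2 statements merged into one kernel-verified Lean document; each statement's English description precedes it below -/
import Mathlib

section
/- Suppose each word B_j (for j in a finite index set J) has the form B_j = (U s^c)^{t_j} U s^{l_j} with t_j > 0 and 0 ≤ l_j ≤ c, where U is a nonempty word that neither begins nor ends with s. Suppose B' is formed as a concatenation B' = B_{j_1} s^{a_1} B_{j_2} s^{a_2} ... B_{j_m} s^{a_m} where a_i = c − l_{j_i} for all i < m and a_m ≤ c − l_{j_m}. Then B' = (U s^c)^{t'} U s^{l'} where t' = m − 1 + Σ_{i=1}^m t_{j_i} and l' = l_{j_m} + a_m ≤ c. -/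
/-- `wpow w i` is the `i`-fold concatenation of the word `w` with itself. -/
def wpow {A : Type*} (w : List A) (i : ℕ) : List A := (List.replicate i w).flatten

lemma wpow_add {A : Type*} (w : List A) (x y : ℕ) :
    wpow w (x + y) = wpow w x ++ wpow w y := by
  rw [wpow, wpow, wpow, List.replicate_add, List.flatten_append]

lemma wpow_one {A : Type*} (w : List A) : wpow w 1 = w := by simp [wpow]

lemma flatten_map_wpow {A : Type*} (w : List A) (g : ℕ → ℕ) (n : ℕ) :
    ((List.range n).map (fun i => wpow w (g i))).flatten
      = wpow w (∑ i ∈ Finset.range n, g i) := by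
  induction n with
  | zero => simp [wpow]
  | succ n ih =>
    rw [List.range_succ, List.map_append, List.flatten_append, ih,
      Finset.sum_range_succ, wpow_add]
    simp

/-- Concatenating semi-periodic blocks `B_i = (U s^c)^{t_i} U s^{l_i}` according to the
local deficit condition yields a semi-periodic block
`(U s^c)^{m-1+Σ t_i} U s^{l_m + a_m}`. -/
theorem local_deficit_concatenation {A : Type*} (s : A) (U : List A)
    (hU : U ≠ []) (hUhead : U.head? ≠ some s) (hUlast : U.getLast? ≠ some s)
    (c : ℕ) (m : ℕ) (hm : 0 < m) (t l a : ℕ → ℕ)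
    (ht : ∀ i < m, 0 < t i) (hl : ∀ i < m, l i ≤ c)
    (ha : ∀ i, i + 1 < m → a i = c - l i)
    (hlast : a (m - 1) ≤ c - l (m - 1)) :
    ((List.range m).map
        (fun i => wpow (U ++ List.replicate c s) (t i) ++ U ++ List.replicate (l i) s
          ++ List.replicate (a i) s)).flatten
      = wpow (U ++ List.replicate c s) ((m - 1) + ∑ i ∈ Finset.range m, t i)
          ++ U ++ List.replicate (l (m - 1) + a (m - 1)) s
      ∧ l (m - 1) + a (m - 1) ≤ c := by
  obtain ⟨n, rfl⟩ : ∃ n, m = n + 1 := ⟨m - 1, (Nat.succ_pred_eq_of_pos hm).symm⟩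
  simp only [Nat.add_sub_cancel] at *
  have hln : l n ≤ c := hl n (by omega)
  have hle : l n + a n ≤ c := by omega
  refine ⟨?_, hle⟩
  set P := U ++ List.replicate c s with hP
  have hblock : ∀ i ∈ List.range n,
      (wpow P (t i) ++ U ++ List.replicate (l i) s ++ List.replicate (a i) s)
        = wpow P (t i + 1) := by
    intro i hi
    rw [List.mem_range] at hi
    have hai : a i = c - l i := ha i (by omega)
    have hli : l i ≤ c := hl i (by omega)
    have hrep : List.replicate (l i) s ++ List.replicate (a i) s
        = List.replicate c s := by
      rw [← List.replicate_add]; congr 1; omega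
    rw [wpow_add, wpow_one, hP]
    simp only [List.append_assoc, hrep]
  rw [List.range_succ, List.map_append, List.flatten_append,
    List.map_congr_left hblock, flatten_map_wpow]
  have hsum : n + ∑ i ∈ Finset.range (n + 1), t i
      = (∑ i ∈ Finset.range n, (t i + 1)) + (t n) := by
    rw [Finset.sum_range_succ, Finset.sum_add_distrib]
    simp; omega
  rw [hsum, wpow_add]
  simp only [List.map_cons, List.map_nil, List.flatten_cons, List.flatten_nil,
    List.append_nil, List.append_assoc, List.replicate_add]
end

section
/- If every word B in a family satisfies B = (U s^c)^{t_B} U s^{l_B} with l_B ≤ c (semi-periodicity with common U and c), then the total number of trailing s's at the end of any concatenation B_{j_1} s^{a_1} ... B_{j_m} s^{a_m} satisfying the local deficit condition (a_i = c − l_{j_i} for i < m and a_m ≤ c − l_{j_m}) is at most c. Consequently runs of consecutive s's in such concatenations never exceed c. -/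
lemma suffix_rep_bound {A : Type*} (s : A) (U : List A) (hU : U ≠ [])
    (hUlast : U.getLast? ≠ some s) (V : List A) (k r : ℕ)
    (h : List.replicate r s <:+ V ++ U ++ List.replicate k s) : r ≤ k := by
  by_contra hc
  push_neg at hc
  obtain ⟨T, hT⟩ := h
  have hr : r = (r - k) + k := by omega
  rw [hr, List.replicate_add, ← List.append_assoc] at hT
  have h2 : T ++ List.replicate (r - k) s = V ++ U := by
    have := List.append_cancel_right (as := T ++ List.replicate (r - k) s)
      (cs := V ++ U) (bs := List.replicate k s) (by simpa [List.append_assoc] using hT)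
    exact this
  have h3 : (T ++ List.replicate (r - k) s).getLast? = some s := by
    rw [List.getLast?_append, List.getLast?_replicate]
    simp [show r - k ≠ 0 by omega]
  rw [h2, List.getLast?_append] at h3
  rcases hu : U.getLast? with _ | x
  · exact hU (List.getLast?_eq_none_iff.mp hu)
  · rw [hu] at h3
    simp only [Option.some_or, Option.some.injEq] at h3
    exact hUlast (by rw [hu, h3])

/-- In a concatenation of semi-periodic blocks satisfying the local deficit condition,
the trailing run of `s`'s has length at most `c`. -/
theorem trailing_spacers_bounded {A : Type*} (s : A) (U : List A)
    (hU : U ≠ []) (hUhead : U.head? ≠ some s) (hUlast : U.getLast? ≠ some s)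
    (c : ℕ) (m : ℕ) (hm : 0 < m) (t l a : ℕ → ℕ)
    (ht : ∀ i < m, 0 < t i) (hl : ∀ i < m, l i ≤ c)
    (ha : ∀ i, i + 1 < m → a i = c - l i)
    (hlast : a (m - 1) ≤ c - l (m - 1)) :
    ∀ r : ℕ,
      (List.replicate r s) <:+
        ((List.range m).map
          (fun i => wpow (U ++ List.replicate c s) (t i) ++ U
            ++ List.replicate (l i) s ++ List.replicate (a i) s)).flatten
      → r ≤ c := by
  intro r hr
  obtain ⟨m', rfl⟩ : ∃ m', m = m' + 1 := ⟨m - 1, by omega⟩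
  rw [List.range_succ, List.map_append, List.flatten_append] at hr
  simp only [List.map_cons, List.map_nil, List.flatten_cons, List.flatten_nil,
    List.append_nil] at hr
  have hk : l m' + a m' ≤ c := by
    have h1 := hl m' (by omega)
    simp only [Nat.add_sub_cancel] at hlast
    omega
  have hr' : List.replicate r s <:+
      (((List.range m').map
          (fun i => wpow (U ++ List.replicate c s) (t i) ++ U
            ++ List.replicate (l i) s ++ List.replicate (a i) s)).flatten
        ++ wpow (U ++ List.replicate c s) (t m')) ++ U
        ++ List.replicate (l m' + a m') s := by
    rw [List.replicate_add]
    simpa only [List.append_assoc] using hr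
  exact le_trans (suffix_rep_bound s U hU hUlast _ _ _ hr') hk
end
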